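/- Let V, X be real Banach spaces, γ : V → X linear and bounded, J : X → ℝ locally Lipschitz such that ∂J maps bounded sets of X to bounded sets of X*, A : V → V*, and h : V → ℝ coercive in the sense that h(u)/‖u‖_V → +∞ as ‖u‖_V → ∞. Assume the map u ↦ A(u) + γ*∂J(γu) is h-relaxed monotone: ⟨A(u)+γ*ξ_u - A(v)-γ*ξ_v, u-v⟩ ≥ h(u-v) for all ξ_u ∈ ∂J(γu), ξ_v ∈ ∂J(γv). Then (⟨A(u),u⟩ - J⁰(γu; -γu))/‖u‖_V → +∞ as ‖u‖_V → ∞. -/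

import Mathlib

open Filter Topology

/-- Clarke generalized directional derivative of `J` at `u` in direction `v`. -/
noncomputable def clarkeDeriv {V : Type*} [NormedAddCommGroup V] [NormedSpace ℝ V]
    (J : V → ℝ) (u v : V) : ℝ :=
  Filter.limsup (fun p : V × ℝ => (J (p.1 + p.2 • v) - J p.1) / p.2)
    ((𝓝 u) ×ˢ (𝓝[>] (0 : ℝ)))

/-- Clarke generalized gradient of `J` at `u`. -/
def clarkeGrad {V : Type*} [NormedAddCommGroup V] [NormedSpace ℝ V]
    (J : V → ℝ) (u : V) : Set (V →L[ℝ] ℝ) :=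
  {ξ | ∀ w, ξ w ≤ clarkeDeriv J u w}

section Aux

variable {X : Type*} [NormedAddCommGroup X] [NormedSpace ℝ X]

private lemma aux_bddu {α : Type*} {F : Filter α} {f : α → ℝ} {C : ℝ}
    (hb : ∀ᶠ p in F, |f p| ≤ C) : IsBoundedUnder (· ≤ ·) F f :=
  ⟨C, eventually_map.2 (hb.mono fun _ hp => (abs_le.1 hp).2)⟩

private lemma aux_bddl {α : Type*} {F : Filter α} {f : α → ℝ} {C : ℝ}
    (hb : ∀ᶠ p in F, |f p| ≤ C) : IsBoundedUnder (· ≥ ·) F f :=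
  ⟨-C, eventually_map.2 (hb.mono fun _ hp => (abs_le.1 hp).1)⟩

private lemma aux_cobdd_le {α : Type*} {F : Filter α} [F.NeBot] {f : α → ℝ} {C : ℝ}
    (hb : ∀ᶠ p in F, |f p| ≤ C) : IsCoboundedUnder (· ≤ ·) F f :=
  (aux_bddl hb).isCoboundedUnder_le

/-- Key local-Lipschitz bound on the difference quotients, uniform in the direction. -/
private lemma exists_clarke_bound (J : X → ℝ) (hJ : LocallyLipschitz J) (u : X) :
    ∃ K : ℝ, 0 ≤ K ∧ ∀ w : X, ∀ᶠ p in (𝓝 u) ×ˢ (𝓝[>] (0 : ℝ)),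
      |(J (p.1 + p.2 • w) - J p.1) / p.2| ≤ K * ‖w‖ := by
  obtain ⟨K, t, ht, hlip⟩ := hJ u
  obtain ⟨ε, hε, hball⟩ := Metric.mem_nhds_iff.1 ht
  refine ⟨K, K.coe_nonneg, fun w => ?_⟩
  have h2 : Set.Ioo (0 : ℝ) (ε / (2 * (‖w‖ + 1))) ∈ 𝓝[>] (0 : ℝ) :=
    Ioo_mem_nhdsGT_of_mem ⟨le_refl _, by positivity⟩
  filter_upwards [Filter.prod_mem_prod (Metric.ball_mem_nhds u (by linarith : 0 < ε / 2)) h2]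
    with p hp
  obtain ⟨hp1, hp2⟩ := hp
  have hpos : 0 < p.2 := hp2.1
  have hnw : ‖p.2 • w‖ < ε / 2 := by
    rw [norm_smul, Real.norm_eq_abs, abs_of_pos hpos]
    have h3 : p.2 * (2 * (‖w‖ + 1)) < ε := (lt_div_iff₀ (by positivity)).1 hp2.2
    nlinarith [norm_nonneg w, hpos]
  have hmem1 : p.1 ∈ t := hball (Metric.ball_subset_ball (by linarith) hp1)
  have hmem2 : p.1 + p.2 • w ∈ t := by
    apply hball
    have : dist (p.1 + p.2 • w) u ≤ dist (p.1 + p.2 • w) p.1 + dist p.1 u := dist_triangle _ _ _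
    have hd : dist (p.1 + p.2 • w) p.1 = ‖p.2 • w‖ := by
      rw [dist_eq_norm, add_sub_cancel_left]
    have := Metric.mem_ball.1 hp1
    exact Metric.mem_ball.2 (by rw [← hd] at hnw; linarith [dist_triangle (p.1 + p.2 • w) p.1 u])
  have hlipb := hlip.dist_le_mul _ hmem2 _ hmem1
  rw [Real.dist_eq, dist_eq_norm, add_sub_cancel_left, norm_smul, Real.norm_eq_abs,
    abs_of_pos hpos] at hlipb
  rw [abs_div, abs_of_pos hpos, div_le_iff₀ hpos]
  calc |J (p.1 + p.2 • w) - J p.1| ≤ K * (p.2 * ‖w‖) := hlipb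
    _ = K * ‖w‖ * p.2 := by ring

private lemma clarkeDeriv_le_of_bound (J : X → ℝ) (u w : X) {C : ℝ}
    (hb : ∀ᶠ p in (𝓝 u) ×ˢ (𝓝[>] (0 : ℝ)), |(J (p.1 + p.2 • w) - J p.1) / p.2| ≤ C) :
    clarkeDeriv J u w ≤ C :=
  limsup_le_of_le (aux_cobdd_le hb) (hb.mono fun _ hp => (abs_le.1 hp).2)

private lemma neg_le_clarkeDeriv_of_bound (J : X → ℝ) (u w : X) {C : ℝ}
    (hb : ∀ᶠ p in (𝓝 u) ×ˢ (𝓝[>] (0 : ℝ)), |(J (p.1 + p.2 • w) - J p.1) / p.2| ≤ C) :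
    -C ≤ clarkeDeriv J u w :=
  le_limsup_of_frequently_le ((hb.mono fun _ hp => (abs_le.1 hp).1).frequently) (aux_bddu hb)

private lemma clarkeDeriv_zero (J : X → ℝ) (u : X) : clarkeDeriv J u 0 = 0 := by
  have h : (fun p : X × ℝ => (J (p.1 + p.2 • (0 : X)) - J p.1) / p.2) = fun _ => (0 : ℝ) := by
    funext p; simp
  rw [clarkeDeriv, h, limsup_const]

/-- Subadditivity of the Clarke directional derivative. -/
private lemma clarkeDeriv_add_le (J : X → ℝ) (hJ : LocallyLipschitz J) (u w₁ w₂ : X) :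
    clarkeDeriv J u (w₁ + w₂) ≤ clarkeDeriv J u w₁ + clarkeDeriv J u w₂ := by
  obtain ⟨K, hK0, hK⟩ := exists_clarke_bound J hJ u
  set F : Filter (X × ℝ) := (𝓝 u) ×ˢ (𝓝[>] (0 : ℝ)) with hF
  set g₁ : X × ℝ → ℝ := fun p => (J (p.1 + p.2 • w₁) - J p.1) / p.2 with hg₁
  set g₂ : X × ℝ → ℝ := fun p => (J (p.1 + p.2 • w₂) - J p.1) / p.2 with hg₂
  set φ : X × ℝ → X × ℝ := fun p => (p.1 + p.2 • w₂, p.2) with hφdef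
  have hφ : Tendsto φ F F := by
    refine Tendsto.prodMk ?_ tendsto_snd
    have hcont : Tendsto (fun p : X × ℝ => p.1 + p.2 • w₂) (𝓝 (u, (0 : ℝ))) (𝓝 u) := by
      have hc : Continuous fun p : X × ℝ => p.1 + p.2 • w₂ :=
        continuous_fst.add (continuous_snd.smul continuous_const)
      simpa using hc.tendsto (u, (0 : ℝ))
    refine hcont.mono_left ?_
    rw [hF, nhds_prod_eq]
    exact Filter.prod_mono le_rfl nhdsWithin_le_nhds
  have hsplit : (fun p : X × ℝ => (J (p.1 + p.2 • (w₁ + w₂)) - J p.1) / p.2) = g₁ ∘ φ + g₂ := by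
    funext p
    simp only [Pi.add_apply, Function.comp_apply, hg₁, hg₂, hφdef]
    have harg : p.1 + p.2 • w₂ + p.2 • w₁ = p.1 + p.2 • (w₁ + w₂) := by
      rw [smul_add]; abel
    rw [← add_div, sub_add_sub_cancel, harg]
  have hb1 := hK w₁
  have hb2 := hK w₂
  have hb1φ : ∀ᶠ p in F, |(g₁ ∘ φ) p| ≤ K * ‖w₁‖ := hφ.eventually hb1
  have step1 : limsup (g₁ ∘ φ + g₂) F ≤ limsup (g₁ ∘ φ) F + limsup g₂ F :=
    limsup_add_le (aux_bddl hb1φ) (aux_bddu hb1φ) (aux_cobdd_le hb2) (aux_bddu hb2)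
  have step2 : limsup (g₁ ∘ φ) F ≤ limsup g₁ F := by
    rw [limsup_comp]
    refine limsup_le_limsup_of_le hφ ?_ (aux_bddu hb1)
    simp only [IsCoboundedUnder, Filter.map_map]
    exact aux_cobdd_le hb1φ
  calc clarkeDeriv J u (w₁ + w₂) = limsup (g₁ ∘ φ + g₂) F := by rw [clarkeDeriv, hsplit]
    _ ≤ limsup (g₁ ∘ φ) F + limsup g₂ F := step1
    _ ≤ limsup g₁ F + limsup g₂ F := by linarith
    _ = clarkeDeriv J u w₁ + clarkeDeriv J u w₂ := rfl

private lemma clarkeDeriv_smul_le (J : X → ℝ) (hJ : LocallyLipschitz J) (u w : X) {c : ℝ}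
    (hc : 0 < c) : clarkeDeriv J u (c • w) ≤ c * clarkeDeriv J u w := by
  obtain ⟨K, hK0, hK⟩ := exists_clarke_bound J hJ u
  set F : Filter (X × ℝ) := (𝓝 u) ×ˢ (𝓝[>] (0 : ℝ)) with hF
  set g : X × ℝ → ℝ := fun p => (J (p.1 + p.2 • w) - J p.1) / p.2 with hg
  set ψ : X × ℝ → X × ℝ := fun p => (p.1, c * p.2) with hψdef
  have hψ : Tendsto ψ F F := by
    refine Tendsto.prodMk tendsto_fst ?_
    have h1 : Tendsto (fun t : ℝ => c * t) (𝓝[>] (0 : ℝ)) (𝓝[>] (0 : ℝ)) := by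
      apply tendsto_nhdsWithin_of_tendsto_nhds_of_eventually_within
      · have : Tendsto (fun t : ℝ => c * t) (𝓝 (0 : ℝ)) (𝓝 (c * 0)) :=
          (continuous_const.mul continuous_id).tendsto 0
        rw [mul_zero] at this
        exact this.mono_left nhdsWithin_le_nhds
      · filter_upwards [self_mem_nhdsWithin] with t ht
        exact mul_pos hc ht
    exact h1.comp tendsto_snd
  have hsplit : (fun p : X × ℝ => (J (p.1 + p.2 • (c • w)) - J p.1) / p.2)
      = (fun x : ℝ => c * x) ∘ (g ∘ ψ) := by
    funext p
    simp only [Function.comp_apply, hg, hψdef]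
    rw [show p.2 • (c • w) = (c * p.2) • w by rw [smul_smul, mul_comm]]
    rcases eq_or_ne p.2 0 with h | h
    · simp [h]
    · field_simp
  have hbψ : ∀ᶠ p in F, |(g ∘ ψ) p| ≤ K * ‖w‖ := hψ.eventually (hK w)
  have step1 : c * limsup (g ∘ ψ) F = limsup ((fun x : ℝ => c * x) ∘ (g ∘ ψ)) F := by
    refine Monotone.map_limsup_of_continuousAt (f := fun x : ℝ => c * x)
      (fun a b hab => mul_le_mul_of_nonneg_left hab hc.le) (g ∘ ψ)
      ((continuous_const.mul continuous_id).continuousAt) (aux_bddu hbψ) (aux_cobdd_le hbψ)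
  have step2 : limsup (g ∘ ψ) F ≤ limsup g F := by
    rw [limsup_comp]
    refine limsup_le_limsup_of_le hψ ?_ (aux_bddu (hK w))
    simp only [IsCoboundedUnder, Filter.map_map]
    exact aux_cobdd_le hbψ
  calc clarkeDeriv J u (c • w) = limsup ((fun x : ℝ => c * x) ∘ (g ∘ ψ)) F := by
        rw [clarkeDeriv, hsplit]
    _ = c * limsup (g ∘ ψ) F := step1.symm
    _ ≤ c * limsup g F := by nlinarith
    _ = c * clarkeDeriv J u w := rfl

private lemma clarkeDeriv_smul (J : X → ℝ) (hJ : LocallyLipschitz J) (u w : X) {c : ℝ}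
    (hc : 0 < c) : clarkeDeriv J u (c • w) = c * clarkeDeriv J u w := by
  refine le_antisymm (clarkeDeriv_smul_le J hJ u w hc) ?_
  have h2 := clarkeDeriv_smul_le J hJ u (c • w) (inv_pos.2 hc)
  rw [inv_smul_smul₀ hc.ne'] at h2
  have h3 := mul_le_mul_of_nonneg_left h2 hc.le
  rwa [← mul_assoc, mul_inv_cancel₀ hc.ne', one_mul] at h3

/-- Upgrade a linear functional dominated by the Clarke derivative to a continuous one. -/
private lemma clarkeGrad_of_linear (J : X → ℝ) (hJ : LocallyLipschitz J) (u : X)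
    (g : X →ₗ[ℝ] ℝ) (hg : ∀ w, g w ≤ clarkeDeriv J u w) :
    ∃ ξ : X →L[ℝ] ℝ, (∀ w, ξ w = g w) ∧ ξ ∈ clarkeGrad J u := by
  obtain ⟨K, hK0, hK⟩ := exists_clarke_bound J hJ u
  have hbound : ∀ w : X, ‖g w‖ ≤ K * ‖w‖ := by
    intro w
    rw [Real.norm_eq_abs, abs_le]
    constructor
    · have h1 := (hg (-w)).trans (clarkeDeriv_le_of_bound J u (-w) (hK (-w)))
      rw [map_neg, norm_neg] at h1
      linarith
    · exact (hg w).trans (clarkeDeriv_le_of_bound J u w (hK w))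
  refine ⟨g.mkContinuous K hbound, fun w => rfl, fun w => ?_⟩
  exact hg w

private lemma clarkeGrad_nonempty (J : X → ℝ) (hJ : LocallyLipschitz J) (u : X) :
    ∃ ξ : X →L[ℝ] ℝ, ξ ∈ clarkeGrad J u := by
  obtain ⟨g, hg1, hg2⟩ := exists_extension_of_le_sublinear
    ((0 : X →ₗ[ℝ] ℝ).toPMap ⊥) (clarkeDeriv J u)
    (fun c hc w => clarkeDeriv_smul J hJ u w hc)
    (fun w₁ w₂ => clarkeDeriv_add_le J hJ u w₁ w₂)
    (fun x => by
      have hx : (x : X) = 0 := Submodule.mem_bot ℝ |>.1 x.2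
      rw [show (LinearMap.toPMap (0 : X →ₗ[ℝ] ℝ) ⊥) x = (0 : X →ₗ[ℝ] ℝ) x from rfl, LinearMap.zero_apply, hx, clarkeDeriv_zero])
  obtain ⟨ξ, _, hξ⟩ := clarkeGrad_of_linear J hJ u g hg2
  exact ⟨ξ, hξ⟩

private lemma clarkeGrad_exists_eq (J : X → ℝ) (hJ : LocallyLipschitz J) (u : X) {z : X}
    (hz : z ≠ 0) : ∃ ξ ∈ clarkeGrad J u, ξ z = clarkeDeriv J u z := by
  have hnn : 0 ≤ clarkeDeriv J u z + clarkeDeriv J u (-z) := by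
    have := clarkeDeriv_add_le J hJ u z (-z)
    rw [add_neg_cancel, clarkeDeriv_zero] at this
    linarith
  obtain ⟨g, hg1, hg2⟩ := exists_extension_of_le_sublinear
    (LinearPMap.mkSpanSingleton z (clarkeDeriv J u z) hz) (clarkeDeriv J u)
    (fun c hc w => clarkeDeriv_smul J hJ u w hc)
    (fun w₁ w₂ => clarkeDeriv_add_le J hJ u w₁ w₂)
    (fun x => by
      obtain ⟨c, hc⟩ := Submodule.mem_span_singleton.1 x.2
      have hx : x = ⟨c • z, hc ▸ x.2⟩ := Subtype.ext hc.symm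
      rw [hx, LinearPMap.mkSpanSingleton'_apply]
      have hval : (⟨c • z, hc ▸ x.2⟩ : (LinearPMap.mkSpanSingleton z
          (clarkeDeriv J u z) hz).domain).1 = c • z := rfl
      rw [hval, smul_eq_mul, RingHom.id_apply]
      rcases lt_trichotomy c 0 with h | h | h
      · have hcd : clarkeDeriv J u (c • z) = (-c) * clarkeDeriv J u (-z) := by
          rw [show c • z = (-c) • (-z) by rw [neg_smul_neg]]
          exact clarkeDeriv_smul J hJ u (-z) (by linarith)
        rw [hcd]
        nlinarith
      · rw [h, zero_smul, clarkeDeriv_zero, zero_mul]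
      · rw [clarkeDeriv_smul J hJ u z h])
  obtain ⟨ξ, hξeq, hξ⟩ := clarkeGrad_of_linear J hJ u g hg2
  refine ⟨ξ, hξ, ?_⟩
  have hmem : z ∈ (LinearPMap.mkSpanSingleton (K := ℝ) (L := ℝ) (σ := RingHom.id ℝ) z (clarkeDeriv J u z) hz).domain :=
    Submodule.mem_span_singleton_self z
  have := hg1 ⟨z, hmem⟩
  rw [LinearPMap.mkSpanSingleton_apply] at this
  rw [hξeq]
  exact this

end Aux

/-- Lemma 3.1: relaxed monotonicity of `u ↦ A u + γ* ∂J(γ u)` with a coercive `h` yields the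
coercivity condition `(⟨A u, u⟩ - J⁰(γu; -γu))/‖u‖ → +∞`. -/
theorem coercivity_from_relaxed_monotonicity
    {V X : Type*} [NormedAddCommGroup V] [NormedSpace ℝ V] [CompleteSpace V]
    [NormedAddCommGroup X] [NormedSpace ℝ X] [CompleteSpace X]
    (γ : V →L[ℝ] X) (J : X → ℝ) (hJ : LocallyLipschitz J)
    (hJbdd : ∀ s : Set X, Bornology.IsBounded s →
      ∃ M : ℝ, ∀ x ∈ s, ∀ ξ ∈ clarkeGrad J x, ‖ξ‖ ≤ M)
    (A : V → (V →L[ℝ] ℝ)) (h : V → ℝ)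
    (hcoer : ∀ M : ℝ, ∃ R : ℝ, ∀ u : V, R ≤ ‖u‖ → M ≤ h u / ‖u‖)
    (hmono : ∀ u v : V, ∀ ξu ∈ clarkeGrad J (γ u), ∀ ξv ∈ clarkeGrad J (γ v),
      h (u - v) ≤ A u (u - v) + ξu (γ (u - v)) - A v (u - v) - ξv (γ (u - v))) :
    ∀ M : ℝ, ∃ R : ℝ, ∀ u : V, R ≤ ‖u‖ →
      M ≤ (A u u - clarkeDeriv J (γ u) (-(γ u))) / ‖u‖ := by
  obtain ⟨ξ0, hξ0⟩ := clarkeGrad_nonempty J hJ (γ 0)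
  set C : ℝ := ‖A 0‖ + ‖ξ0‖ * ‖γ‖ with hC
  intro M
  obtain ⟨R, hR⟩ := hcoer (M + C)
  refine ⟨max R 1, fun u hu => ?_⟩
  have h1 : (1 : ℝ) ≤ ‖u‖ := le_trans (le_max_right R 1) hu
  have hupos : (0 : ℝ) < ‖u‖ := by linarith
  -- choose ξu attaining the Clarke derivative in direction -(γ u)
  have key : ∃ ξu ∈ clarkeGrad J (γ u), ξu (γ u) = -(clarkeDeriv J (γ u) (-(γ u))) := by
    rcases eq_or_ne (γ u) 0 with hz | hz
    · obtain ⟨ξu, hξu⟩ := clarkeGrad_nonempty J hJ (γ u)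
      refine ⟨ξu, hξu, ?_⟩
      simp [hz, clarkeDeriv_zero]
    · obtain ⟨ξu, hξu, hval⟩ := clarkeGrad_exists_eq J hJ (γ u) (neg_ne_zero.2 hz)
      refine ⟨ξu, hξu, ?_⟩
      rw [← hval, map_neg]
      ring
  obtain ⟨ξu, hξu, hval⟩ := key
  have hmon := hmono u 0 ξu hξu ξ0 hξ0
  simp only [sub_zero] at hmon
  -- bounds on the error terms
  have hA0 : -(‖A 0‖ * ‖u‖) ≤ A 0 u := by
    have := (A 0).le_opNorm u
    have habs : |A 0 u| ≤ ‖A 0‖ * ‖u‖ := by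
      rw [← Real.norm_eq_abs]; exact this
    linarith [(abs_le.1 habs).1]
  have hξ0b : -(‖ξ0‖ * ‖γ‖ * ‖u‖) ≤ ξ0 (γ u) := by
    have h2 : |ξ0 (γ u)| ≤ ‖ξ0‖ * ‖γ u‖ := by
      rw [← Real.norm_eq_abs]; exact ξ0.le_opNorm (γ u)
    have h3 : ‖ξ0‖ * ‖γ u‖ ≤ ‖ξ0‖ * (‖γ‖ * ‖u‖) :=
      mul_le_mul_of_nonneg_left (γ.le_opNorm u) (norm_nonneg _)
    have := (abs_le.1 h2).1
    nlinarith
  have hcore : h u - C * ‖u‖ ≤ A u u - clarkeDeriv J (γ u) (-(γ u)) := by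
    have : A u u - clarkeDeriv J (γ u) (-(γ u)) = A u u + ξu (γ u) := by
      rw [hval]; ring
    rw [this, hC]
    nlinarith [hmon, hA0, hξ0b]
  have hhu : M + C ≤ h u / ‖u‖ := hR u (le_trans (le_max_left R 1) hu)
  have hhub : (M + C) * ‖u‖ ≤ h u := (le_div_iff₀ hupos).1 hhu
  rw [le_div_iff₀ hupos]
  nlinarith
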